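/- For all real numbers a ≤ b there exists a constant C > 0 such that for every complex number s with a ≤ Re(s) ≤ b and s ∉ {0, 1}, one has ‖ξ(s) + 1/s + 1/(1−s)‖ ≤ C; that is, the entire function ξ(s) + 1/s + 1/(1−s) is bounded in every vertical strip. -/

import Mathlib

open Real Complex Set MeasureTheory Filter Asymptotics Topology

/-- A Mellin transform of a function decaying rapidly at `0` and `∞` is bounded on
vertical strips. -/
lemma mellin_bounded_on_strip {f : ℝ → ℂ} (hf : LocallyIntegrableOn f (Ioi 0))
    (htop : ∀ r : ℝ, f =O[atTop] (· ^ r)) (hbot : ∀ r : ℝ, f =O[𝓝[>] 0] (· ^ r))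
    (a b : ℝ) :
    ∃ C : ℝ, ∀ s : ℂ, a ≤ s.re → s.re ≤ b → ‖mellin f s‖ ≤ C := by
  have hconv : ∀ c : ℝ, MellinConvergent f (c : ℂ) := fun c ↦ by
    refine mellinConvergent_of_isBigO_rpow hf (htop (-(c + 1))) ?_ (hbot (-(c - 1))) ?_ <;>
      simp <;> linarith
  have hIa : Integrable (fun x : ℝ ↦ x ^ (a - 1) * ‖f x‖)
      (volume.restrict (Ioi 0)) := by
    have := (hconv a).norm
    refine this.congr (ae_restrict_of_forall_mem measurableSet_Ioi fun x hx ↦ ?_)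
    have hx0 := mem_Ioi.mp hx
    simp [norm_smul, Complex.norm_cpow_eq_rpow_re_of_pos hx0]
  have hIb : Integrable (fun x : ℝ ↦ x ^ (b - 1) * ‖f x‖)
      (volume.restrict (Ioi 0)) := by
    have := (hconv b).norm
    refine this.congr (ae_restrict_of_forall_mem measurableSet_Ioi fun x hx ↦ ?_)
    have hx0 := mem_Ioi.mp hx
    simp [norm_smul, Complex.norm_cpow_eq_rpow_re_of_pos hx0]
  refine ⟨∫ x in Ioi (0:ℝ), (x ^ (a - 1) * ‖f x‖ + x ^ (b - 1) * ‖f x‖), fun s hs1 hs2 ↦ ?_⟩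
  refine norm_integral_le_of_norm_le (hIa.add hIb)
    (ae_restrict_of_forall_mem measurableSet_Ioi fun x hx ↦ ?_)
  have hx0 : (0:ℝ) < x := mem_Ioi.mp hx
  rw [norm_smul, Complex.norm_cpow_eq_rpow_re_of_pos hx0, Complex.sub_re, Complex.one_re]
  have : x ^ (s.re - 1) ≤ x ^ (a - 1) + x ^ (b - 1) := by
    rcases le_total x 1 with hx1 | hx1
    · calc x ^ (s.re - 1) ≤ x ^ (a - 1) :=
            Real.rpow_le_rpow_of_exponent_ge hx0 hx1 (by linarith)
        _ ≤ x ^ (a - 1) + x ^ (b - 1) :=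
            le_add_of_nonneg_right (Real.rpow_nonneg hx0.le _)
    · calc x ^ (s.re - 1) ≤ x ^ (b - 1) :=
            Real.rpow_le_rpow_of_exponent_le hx1 (by linarith)
        _ ≤ x ^ (a - 1) + x ^ (b - 1) :=
            le_add_of_nonneg_left (Real.rpow_nonneg hx0.le _)
  calc x ^ (s.re - 1) * ‖f x‖ ≤ (x ^ (a - 1) + x ^ (b - 1)) * ‖f x‖ :=
        mul_le_mul_of_nonneg_right this (norm_nonneg _)
    _ = x ^ (a - 1) * ‖f x‖ + x ^ (b - 1) * ‖f x‖ := by ring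

/-- Boundedness in vertical strips: `ξ(s) + 1/s + 1/(1−s)` is bounded on every
vertical strip `a ≤ Re(s) ≤ b` (away from the two poles of `ξ`). -/
theorem completedRiemannZeta_bounded_in_vertical_strips (a b : ℝ) (hab : a ≤ b) :
    ∃ C > 0, ∀ s : ℂ, a ≤ s.re → s.re ≤ b → s ≠ 0 → s ≠ 1 →
      ‖completedRiemannZeta s + 1 / s + 1 / (1 - s)‖ ≤ C := by
  set P := HurwitzZeta.hurwitzEvenFEPair 0
  obtain ⟨C, hC⟩ := mellin_bounded_on_strip (f := P.f_modif) P.toStrongFEPair.hf_int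
    P.isStrongFEPair_toStrongFEPair.hf_top P.isStrongFEPair_toStrongFEPair.hf_zero (a / 2) (b / 2)
  refine ⟨max 1 C, lt_of_lt_of_le one_pos (le_max_left _ _), fun s ha hb hs0 hs1 ↦ ?_⟩
  have key : completedRiemannZeta s + 1 / s + 1 / (1 - s) = completedRiemannZeta₀ s := by
    rw [completedRiemannZeta_eq]; ring
  rw [key]
  have h₀ : completedRiemannZeta₀ s = (mellin P.f_modif (s / 2)) / 2 := rfl
  rw [h₀]
  have hre : (s / 2).re = s.re / 2 := by
    simp [Complex.div_re]
  have := hC (s / 2) (by rw [hre]; linarith) (by rw [hre]; linarith)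
  rw [norm_div]
  calc ‖mellin P.f_modif (s / 2)‖ / ‖(2:ℂ)‖ ≤ C / ‖(2:ℂ)‖ := by
        gcongr
    _ ≤ max 1 C := by
      rw [Complex.norm_ofNat]
      have : C ≤ max 1 C := le_max_right _ _
      nlinarith [le_max_left 1 C]
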